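/- A commutative ring R is spanned by units if and only if there exists a family (Rᵢ)_{i ∈ I} of subrings of R with ⋃_{i ∈ I} Rᵢ = R such that for each i there are an integer c(i) ≥ 1 and a surjective ring homomorphism from the Laurent polynomial ring ℤ[T₁^{±1},…,T_{c(i)}^{±1}] onto Rᵢ. -/

import Mathlib

universe u

/-- A commutative ring is *spanned by units* if every element is a finite
(possibly empty) sum of units. -/
def SpannedByUnits (R : Type*) [CommRing R] : Prop :=
  ∀ x : R, ∃ s : Multiset Rˣ, (s.map (fun u => (u : R))).sum = x

section Aux

variable {A B : Type*} [CommRing A] [CommRing B]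

/-- The sum in `SpannedByUnits` elaborates through the multiset monad; normalize it. -/
lemma sbu_norm (s : Multiset Aˣ) :
    (s.map (fun u => (u : A))).sum = (s.map Units.val).sum := by
  simp [Multiset.map_id', Multiset.bind_singleton]

lemma sbu_add {x y : A} (hx : ∃ s : Multiset Aˣ, (s.map (fun u => (u : A))).sum = x)
    (hy : ∃ s : Multiset Aˣ, (s.map (fun u => (u : A))).sum = y) :
    ∃ s : Multiset Aˣ, (s.map (fun u => (u : A))).sum = x + y := by
  obtain ⟨s, hs⟩ := hx
  obtain ⟨t, ht⟩ := hy
  rw [sbu_norm] at hs ht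
  refine ⟨s + t, ?_⟩
  rw [sbu_norm, Multiset.map_add, Multiset.sum_add, hs, ht]

lemma sbu_neg {x : A} (hx : ∃ s : Multiset Aˣ, (s.map (fun u => (u : A))).sum = x) :
    ∃ s : Multiset Aˣ, (s.map (fun u => (u : A))).sum = -x := by
  obtain ⟨s, hs⟩ := hx
  rw [sbu_norm] at hs
  refine ⟨s.map (fun u => -u), ?_⟩
  rw [sbu_norm, Multiset.map_map, ← hs]
  simp [Function.comp_def]

lemma sbu_zsmul {x : A} (hx : ∃ s : Multiset Aˣ, (s.map (fun u => (u : A))).sum = x) (n : ℤ) :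
    ∃ s : Multiset Aˣ, (s.map (fun u => (u : A))).sum = n • x := by
  induction n using Int.induction_on with
  | zero => exact ⟨0, by rw [sbu_norm]; simp⟩
  | succ k ih =>
      obtain ⟨t, ht⟩ := sbu_add ih hx
      exact ⟨t, by rw [ht, add_smul, one_smul]⟩
  | pred k ih =>
      obtain ⟨t, ht⟩ := sbu_add ih (sbu_neg hx)
      refine ⟨t, ?_⟩
      rw [ht, sub_smul, one_smul, sub_eq_add_neg]

lemma sbu_map (φ : A →+* B) {x : A}
    (hx : ∃ s : Multiset Aˣ, (s.map (fun u => (u : A))).sum = x) :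
    ∃ s : Multiset Bˣ, (s.map (fun u => (u : B))).sum = φ x := by
  obtain ⟨s, hs⟩ := hx
  rw [sbu_norm] at hs
  refine ⟨s.map (Units.map (φ : A →* B)), ?_⟩
  rw [sbu_norm, Multiset.map_map, ← hs, map_multiset_sum, Multiset.map_map]
  congr 1

end Aux

/-- The monomial `single g 1` is a unit in a group algebra. -/
noncomputable def laurentUnit {G : Type*} [AddCommGroup G] (g : G) :
    (AddMonoidAlgebra ℤ G)ˣ where
  val := AddMonoidAlgebra.single g 1
  inv := AddMonoidAlgebra.single (-g) 1
  val_inv := by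
    rw [AddMonoidAlgebra.single_mul_single]
    simp [AddMonoidAlgebra.one_def]
  inv_val := by
    rw [AddMonoidAlgebra.single_mul_single]
    simp [AddMonoidAlgebra.one_def]

lemma laurent_spanned (G : Type*) [AddCommGroup G] :
    SpannedByUnits (AddMonoidAlgebra ℤ G) := by
  intro x
  induction x using AddMonoidAlgebra.induction_on with
  | of g =>
      refine ⟨{laurentUnit g}, ?_⟩
      rw [sbu_norm]
      simp [laurentUnit, AddMonoidAlgebra.of_apply]
  | add f g hf hg => exact sbu_add hf hg
  | smul r f hf => exact sbu_zsmul hf r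

lemma exists_subring (R : Type u) [CommRing R] (x : R)
    (hx : ∃ s : Multiset Rˣ, (s.map (fun u => (u : R))).sum = x) :
    ∃ (S : Subring R) (c : ℕ), x ∈ S ∧ 1 ≤ c ∧
      ∃ f : AddMonoidAlgebra ℤ (Fin c →₀ ℤ) →+* S, Function.Surjective f := by
  obtain ⟨s, hs⟩ := hx
  rw [sbu_norm] at hs
  set l := s.toList with hl
  set c := l.length + 1 with hc
  set u : Fin c → Rˣ := fun i => l.getD i 1 with hu
  let g : Multiplicative (Fin c →₀ ℤ) →* Rˣ :=
    MonoidHom.mk' (fun v => ∏ i, u i ^ (Multiplicative.toAdd v i)) (by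
      intro v w
      simp [← Finset.prod_mul_distrib, zpow_add, Finsupp.add_apply])
  let f0 : AddMonoidAlgebra ℤ (Fin c →₀ ℤ) →+* R :=
    ((AddMonoidAlgebra.lift ℤ R (Fin c →₀ ℤ)) ((Units.coeHom R).comp g)).toRingHom
  have hunit : ∀ i : Fin c, ((u i : R)) ∈ f0.range := by
    intro i
    refine ⟨AddMonoidAlgebra.single (Finsupp.single i 1) 1, ?_⟩
    show (AddMonoidAlgebra.lift ℤ R (Fin c →₀ ℤ)) ((Units.coeHom R).comp g)
        (AddMonoidAlgebra.single (Finsupp.single i 1) 1) = _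
    rw [AddMonoidAlgebra.lift_single, one_smul]
    show ((∏ j, u j ^ ((Finsupp.single i 1 : Fin c →₀ ℤ) j) : Rˣ) : R) = _
    congr 1
    rw [Finset.prod_eq_single i]
    · simp
    · intro j _ hj
      rw [Finsupp.single_apply, if_neg (by exact fun h => hj h.symm), zpow_zero]
    · simp
  have hxmem : x ∈ f0.range := by
    rw [← hs]
    refine Subring.multiset_sum_mem _ _ ?_
    intro a ha
    obtain ⟨v, hv, rfl⟩ := Multiset.mem_map.mp ha
    have hvl : v ∈ l := (Multiset.mem_toList).mpr hv
    obtain ⟨k, hk, hget⟩ := List.getElem_of_mem hvl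
    have hk' : (k : ℕ) < c := by omega
    have huv : u ⟨k, hk'⟩ = v := by
      rw [hu]
      simp only [List.getD_eq_getElem?_getD]
      rw [List.getElem?_eq_getElem hk]
      simpa using hget
    rw [← huv]
    exact hunit _
  exact ⟨f0.range, c, hxmem, by omega, f0.rangeRestrict, f0.rangeRestrict_surjective⟩

theorem spannedByUnits_iff_union_of_laurent_quotients (R : Type u) [CommRing R] :
    SpannedByUnits R ↔
      ∃ (I : Type u) (Rs : I → Subring R) (c : I → ℕ),
        (⋃ i, (Rs i : Set R)) = Set.univ ∧
        ∀ i, 1 ≤ c i ∧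
          ∃ f : AddMonoidAlgebra ℤ (Fin (c i) →₀ ℤ) →+* (Rs i),
            Function.Surjective f := by
  constructor
  · intro h
    have H := fun x : R => exists_subring R x (h x)
    choose S c hmem hc f hf using H
    refine ⟨R, S, c, ?_, fun i => ⟨hc i, f i, hf i⟩⟩
    exact Set.eq_univ_of_forall fun x => Set.mem_iUnion.mpr ⟨x, hmem x⟩
  · rintro ⟨I, Rs, c, hU, hI⟩ x
    have hx : x ∈ ⋃ i, (Rs i : Set R) := hU ▸ Set.mem_univ x
    obtain ⟨i, hxi⟩ := Set.mem_iUnion.mp hx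
    obtain ⟨-, f, hf⟩ := hI i
    obtain ⟨p, hp⟩ := hf ⟨x, hxi⟩
    have := sbu_map ((Rs i).subtype.comp f) (laurent_spanned (Fin (c i) →₀ ℤ) p)
    simpa [hp] using this
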